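/- (Factorization) Let n ≥ 2 and N ∈ ℕ (N ≥ 1). For every 2N-times continuously differentiable function u on 𝔹, the composition of the operators L_0, L_1, …, L_{N-1} satisfies L_0[L_1[⋯ L_{N-1}[u] ⋯]] (x) = (1-|x|²)^N (Δ^N u)(x) for all x ∈ 𝔹; in operator form, L_0 L_1 ⋯ L_{N-1} = M^N Δ^N. -/

import Mathlib

open MeasureTheory
open scoped BigOperators ENNReal Classical

noncomputable section

/-- Euclidean space `ℝⁿ`. -/
abbrev E (n : ℕ) := EuclideanSpace ℝ (Fin n)

/-- The open unit ball of `ℝⁿ`. -/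
def unitBall (n : ℕ) : Set (E n) := Metric.ball 0 1

/-- The Laplacian `Δf = ∑ ∂²f/∂xᵢ²`. -/
def lap {n : ℕ} (f : E n → ℂ) (x : E n) : ℂ :=
  ∑ i : Fin n,
    fderiv ℝ (fun y => fderiv ℝ f y (EuclideanSpace.single i 1)) x (EuclideanSpace.single i 1)

/-- The `N`-th iterate `Δ^N` of the Laplacian. -/
def lapIter {n : ℕ} (N : ℕ) (f : E n → ℂ) : E n → ℂ := lap^[N] f

/-- The radial derivative `R[u](x) = x ⋅ ∇u(x)`. -/
def radialDeriv {n : ℕ} (f : E n → ℂ) (x : E n) : ℂ := fderiv ℝ f x x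

/-- The operator `L_θ[u] = (1-|x|²) Δu + 4θ R[u] + 2θ(n-2-2θ) u`. -/
def Lop {n : ℕ} (θ : ℝ) (f : E n → ℂ) (x : E n) : ℂ :=
  ((1 - ‖x‖ ^ 2 : ℝ) : ℂ) * lap f x + ((4 * θ : ℝ) : ℂ) * radialDeriv f x
    + ((2 * θ * ((n : ℝ) - 2 - 2 * θ) : ℝ) : ℂ) * f x

/-- The multiplication operator `M^j[u](x) = (1-|x|²)^j u(x)` for integer `j`. -/
def Mnat {n : ℕ} (j : ℕ) (f : E n → ℂ) (x : E n) : ℂ :=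
  (((1 - ‖x‖ ^ 2) ^ j : ℝ) : ℂ) * f x

/-- The multiplication operator `M^λ[u](x) = (1-|x|²)^λ u(x)` for real `λ`. -/
def Mr {n : ℕ} (lam : ℝ) (f : E n → ℂ) (x : E n) : ℂ :=
  (((1 - ‖x‖ ^ 2) ^ lam : ℝ) : ℂ) * f x

/-- `u` is `N`-harmonic on the unit ball: `u` is `C^{2N}` there and `Δ^N u = 0`. -/
def NHarm (n N : ℕ) (u : E n → ℂ) : Prop :=
  ContDiffOn ℝ (2 * N : ℕ) u (unitBall n) ∧ ∀ x ∈ unitBall n, lapIter N u x = 0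

/-- `‖u‖_{p,α}^p = ∫_𝔹 |u|^p (1-|x|²)^α dV`, as a lower integral. -/
def wInt (n : ℕ) (p α : ℝ) (u : E n → ℂ) : ℝ≥0∞ :=
  ∫⁻ x in unitBall n, ENNReal.ofReal (‖u x‖ ^ p * (1 - ‖x‖ ^ 2) ^ α)

/-- Membership in `PH^p_{N,α}(𝔹)`. -/
def memPH (n N : ℕ) (p α : ℝ) (u : E n → ℂ) : Prop :=
  NHarm n N u ∧ wInt n p α u < ⊤

/-- The quantities `b_{j,N}(p)`. -/
def bCoef (n N j : ℕ) (p : ℝ) : ℝ :=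
  if j = 0 then -1 - ((N : ℝ) - 1) * p
  else max (-1 - ((N : ℝ) + (j : ℝ) - 1) * p) (-(n : ℝ) - ((N : ℝ) - (j : ℝ) - (n : ℝ) + 1) * p)

/-- The quantities `a_{j,N}(p)`. -/
def aCoef (n N j : ℕ) (p : ℝ) : ℝ :=
  min (bCoef n N j p) (-1 - ((N : ℝ) - (j : ℝ)) * p)

end

/-- The composition `L_0 L_1 ⋯ L_{N-1}`. -/
noncomputable def Lcomp {n : ℕ} : ℕ → (E n → ℂ) → (E n → ℂ)
  | 0, u => u
  | (k + 1), u => Lcomp k (Lop (k : ℝ) u)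

noncomputable section Aux7

variable {n : ℕ}

/-- Partial derivative in coordinate direction `i`. -/
def pd (i : Fin n) (f : E n → ℂ) : E n → ℂ :=
  fun x => fderiv ℝ f x (EuclideanSpace.single i (1:ℝ))

lemma lap_eq (f : E n → ℂ) (x : E n) : lap f x = ∑ i, pd i (pd i f) x := rfl

lemma contDiffOn_pd {m : WithTop ℕ∞} {f : E n → ℂ} {s : Set (E n)} (hs : IsOpen s)
    (hf : ContDiffOn ℝ (m + 1) f s) (i : Fin n) : ContDiffOn ℝ m (pd i f) s :=
  (hf.fderiv_of_isOpen hs le_rfl).clm_apply contDiffOn_const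

lemma contDiffOn_lap {m : WithTop ℕ∞} {f : E n → ℂ} {s : Set (E n)} (hs : IsOpen s)
    (hf : ContDiffOn ℝ (m + 2) f s) : ContDiffOn ℝ m (lap f) s := by
  have hf' : ContDiffOn ℝ ((m + 1) + 1) f s := by
    rw [add_assoc]; exact hf
  have : ∀ i : Fin n, ContDiffOn ℝ m (pd i (pd i f)) s := fun i =>
    contDiffOn_pd hs (contDiffOn_pd hs hf' i) i
  exact ContDiffOn.sum (fun i _ => this i)

lemma contDiffOn_radial {m : WithTop ℕ∞} {f : E n → ℂ} {s : Set (E n)} (hs : IsOpen s)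
    (hf : ContDiffOn ℝ (m + 1) f s) : ContDiffOn ℝ m (radialDeriv f) s :=
  (hf.fderiv_of_isOpen hs le_rfl).clm_apply contDiffOn_id

end Aux7
noncomputable section Aux7b
variable {n : ℕ}

/-- The weight `Q x = 1 - ‖x‖²` as a complex-valued function. -/
def Qf (n : ℕ) : E n → ℂ := fun x => ((1 - ‖x‖ ^ 2 : ℝ) : ℂ)

lemma norm_sq_eq (x : E n) : ‖x‖ ^ 2 = ∑ j, x j * x j := by
  rw [← real_inner_self_eq_norm_sq]
  exact PiLp.inner_apply x x

lemma Qf_eq : Qf n = fun x => 1 - ∑ j, (x j : ℂ) * (x j : ℂ) := by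
  funext x; simp [Qf, norm_sq_eq]

lemma hasFDerivAt_coord (i : Fin n) (x : E n) :
    HasFDerivAt (fun y : E n => ((y i : ℝ) : ℂ))
      (Complex.ofRealCLM.comp (EuclideanSpace.proj i)) x := by
  have h := (Complex.ofRealCLM.hasFDerivAt (x := x i)).comp x
    (EuclideanSpace.proj (𝕜 := ℝ) i).hasFDerivAt
  exact h

lemma hasFDerivAt_Qf (x : E n) :
    HasFDerivAt (Qf n)
      (- ∑ j, (2 * (x j : ℂ)) • (Complex.ofRealCLM.comp (EuclideanSpace.proj j))) x := by
  rw [Qf_eq]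
  have : HasFDerivAt (fun y : E n => ∑ j, (y j : ℂ) * (y j : ℂ))
      (∑ j, (2 * (x j : ℂ)) • (Complex.ofRealCLM.comp (EuclideanSpace.proj j))) x := by
    apply HasFDerivAt.fun_sum
    intro j _
    have := (hasFDerivAt_coord j x).fun_mul (hasFDerivAt_coord j x)
    exact this.congr_fderiv (by ext v; simp; ring)
  exact this.const_sub 1

lemma contDiff_Qf : ContDiff ℝ (⊤ : ℕ∞) (Qf n) := by
  rw [Qf_eq]
  apply ContDiff.sub contDiff_const
  apply ContDiff.sum
  intro j _
  have hc : ContDiff ℝ ((⊤ : ℕ∞) : WithTop ℕ∞) (fun y : E n => ((y j : ℝ) : ℂ)) :=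
    (Complex.ofRealCLM.comp (EuclideanSpace.proj (𝕜 := ℝ) j)).contDiff
  exact hc.mul hc

lemma fderiv_Qf_apply (x v : E n) :
    fderiv ℝ (Qf n) x v = ((-2 * ∑ j, x j * v j : ℝ) : ℂ) := by
  rw [(hasFDerivAt_Qf x).fderiv]
  simp [Finset.mul_sum]
  exact Finset.sum_congr rfl fun _ _ => by ring

lemma pd_Qf (i : Fin n) (x : E n) : pd i (Qf n) x = -2 * (x i : ℂ) := by
  rw [pd, fderiv_Qf_apply]
  simp [EuclideanSpace.single_apply, mul_ite, Finset.sum_ite_eq]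

end Aux7b
noncomputable section Aux7c
open Topology Filter
variable {n : ℕ} {f g : E n → ℂ} {x : E n} {s : Set (E n)}

lemma cda_of (hs : IsOpen s) (hx : x ∈ s) {m : WithTop ℕ∞} (hf : ContDiffOn ℝ m f s) :
    ContDiffAt ℝ m f x := (hf x hx).contDiffAt (hs.mem_nhds hx)

lemma pd_contDiffAt {m : WithTop ℕ∞} (hf : ContDiffAt ℝ (m + 1) f x) (i : Fin n) :
    ContDiffAt ℝ m (pd i f) x := (hf.fderiv_right le_rfl).clm_apply contDiffAt_const

lemma pd_diffAt (hf : ContDiffAt ℝ 2 f x) (i : Fin n) : DifferentiableAt ℝ (pd i f) x := by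
  have : ContDiffAt ℝ ((1 : WithTop ℕ∞) + 1) f x := by
    refine hf.of_le ?_
    norm_num
  exact ((pd_contDiffAt this i)).differentiableAt (by norm_num)

lemma ev_diffAt (hf : ContDiffAt ℝ 2 f x) : ∀ᶠ y in 𝓝 x, DifferentiableAt ℝ f y := by
  have h := hf.eventually (by simp)
  exact h.mono fun y hy => hy.differentiableAt (by norm_num)

lemma radial_eq_sum (hf : DifferentiableAt ℝ f x) :
    radialDeriv f x = ∑ i, ((x i : ℝ) : ℂ) * pd i f x := by
  have hx : x = ∑ i, (x i) • (EuclideanSpace.single i (1:ℝ) : E n) := by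
    ext j
    rw [show (∑ i, (x i) • (EuclideanSpace.single i (1:ℝ) : E n)) j
        = ∑ i, ((x i) • (EuclideanSpace.single i (1:ℝ) : E n)) j from by rw [WithLp.ofLp_sum, Finset.sum_apply]]
    simp [EuclideanSpace.single_apply, Finset.sum_ite_eq']
  rw [radialDeriv, show (fderiv ℝ f x) x = fderiv ℝ f x (∑ i, (x i) • (EuclideanSpace.single i (1:ℝ) : E n)) from congrArg _ hx, map_sum]
  exact Finset.sum_congr rfl fun i _ => by
    rw [(fderiv ℝ f x).map_smul, Complex.real_smul]; rfl

lemma pd_congr (h : f =ᶠ[𝓝 x] g) (i : Fin n) : pd i f x = pd i g x := by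
  simp only [pd, h.fderiv_eq]

lemma lap_congr (h : f =ᶠ[𝓝 x] g) : lap f x = lap g x := by
  rw [lap_eq, lap_eq]
  refine Finset.sum_congr rfl fun i _ => ?_
  have h2 : pd i f =ᶠ[𝓝 x] pd i g :=
    (h.eventuallyEq_nhds).mono fun y hy => by simp only [pd, hy.fderiv_eq]
  exact pd_congr h2 i

lemma pd_add (hf : DifferentiableAt ℝ f x) (hg : DifferentiableAt ℝ g x) (i : Fin n) :
    pd i (fun y => f y + g y) x = pd i f x + pd i g x := by
  show fderiv ℝ (fun y => f y + g y) x _ = _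
  rw [fderiv_fun_add hf hg]; rfl

lemma pd_const_mul (hf : DifferentiableAt ℝ f x) (c : ℂ) (i : Fin n) :
    pd i (fun y => c * f y) x = c * pd i f x := by
  show fderiv ℝ (fun y => c * f y) x _ = _
  rw [fderiv_const_mul hf c]; rfl

lemma lap_add (hf : ContDiffAt ℝ 2 f x) (hg : ContDiffAt ℝ 2 g x) :
    lap (fun y => f y + g y) x = lap f x + lap g x := by
  rw [lap_eq, lap_eq, lap_eq, ← Finset.sum_add_distrib]
  refine Finset.sum_congr rfl fun i _ => ?_
  have hev : pd i (fun y => f y + g y) =ᶠ[𝓝 x] fun y => pd i f y + pd i g y := by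
    filter_upwards [ev_diffAt hf, ev_diffAt hg] with y hfy hgy
    exact pd_add hfy hgy i
  rw [pd_congr hev i, pd_add (pd_diffAt hf i) (pd_diffAt hg i) i]

lemma lap_const_mul (c : ℂ) (hf : ContDiffAt ℝ 2 f x) :
    lap (fun y => c * f y) x = c * lap f x := by
  rw [lap_eq, lap_eq, Finset.mul_sum]
  refine Finset.sum_congr rfl fun i _ => ?_
  have hev : pd i (fun y => c * f y) =ᶠ[𝓝 x] fun y => c * pd i f y := by
    filter_upwards [ev_diffAt hf] with y hfy
    exact pd_const_mul hfy c i
  rw [pd_congr hev i, pd_const_mul (pd_diffAt hf i) c i]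

end Aux7c
noncomputable section Aux7d
open Topology Filter
variable {n : ℕ} {f g : E n → ℂ} {x : E n} {s : Set (E n)}

lemma two_eq : (2 : WithTop ℕ∞) = 1 + 1 := by norm_num
lemma three_eq : (3 : WithTop ℕ∞) = 2 + 1 := by norm_num

lemma fderiv_diffAt (hf : ContDiffAt ℝ 2 f x) : DifferentiableAt ℝ (fderiv ℝ f) x :=
  (hf.fderiv_right (m := 1) (by norm_num)).differentiableAt (by norm_num)

lemma radial_diffAt (hf : ContDiffAt ℝ 2 f x) : DifferentiableAt ℝ (radialDeriv f) x :=
  (fderiv_diffAt hf).clm_apply differentiableAt_id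

lemma fderiv_pd (hf : DifferentiableAt ℝ (fderiv ℝ f) x) (i : Fin n) (v : E n) :
    fderiv ℝ (pd i f) x v
      = (fderiv ℝ (fderiv ℝ f) x v) (EuclideanSpace.single i (1:ℝ)) := by
  have h := fderiv_clm_apply (c := fderiv ℝ f)
    (u := fun _ => (EuclideanSpace.single i (1:ℝ) : E n)) hf (differentiableAt_const _)
  have : fderiv ℝ (pd i f) x = fderiv ℝ (fun y => fderiv ℝ f y (EuclideanSpace.single i (1:ℝ))) x := rfl
  rw [this, h]
  simp

lemma fderiv_radial (hf : DifferentiableAt ℝ (fderiv ℝ f) x)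
    (hf' : DifferentiableAt ℝ f x) (v : E n) :
    fderiv ℝ (radialDeriv f) x v
      = (fderiv ℝ (fderiv ℝ f) x v) x + fderiv ℝ f x v := by
  have h := fderiv_clm_apply (c := fderiv ℝ f) (u := fun y => y) hf differentiableAt_id
  have h2 : fderiv ℝ (radialDeriv f) x = fderiv ℝ (fun y => fderiv ℝ f y y) x := rfl
  rw [h2, h]
  simp [fderiv_id']
  ring

/-- On an open set where `f` is `C²`, `∂ᵢ(Rf) = R(∂ᵢ f) + ∂ᵢ f`. -/
lemma pd_radial_eq (hf : ContDiffAt ℝ 2 f x) (i : Fin n) :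
    pd i (radialDeriv f) x = radialDeriv (pd i f) x + pd i f x := by
  have hd := fderiv_diffAt hf
  have hsym := (hf.isSymmSndFDerivAt (by norm_num)).eq
  have h1 : pd i (radialDeriv f) x
      = (fderiv ℝ (fderiv ℝ f) x (EuclideanSpace.single i 1)) x
        + fderiv ℝ f x (EuclideanSpace.single i 1) :=
    fderiv_radial hd (hf.differentiableAt (by norm_num)) _
  rw [h1, hsym]
  congr 1
  rw [radialDeriv, fderiv_pd hd i x]

end Aux7d
noncomputable section Aux7e
open Topology Filter
variable {n : ℕ} {f g a b : E n → ℂ} {x : E n} {s : Set (E n)}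

lemma pd_mul (ha : DifferentiableAt ℝ a x) (hb : DifferentiableAt ℝ b x) (i : Fin n) :
    pd i (fun y => a y * b y) x = pd i a x * b x + a x * pd i b x := by
  show fderiv ℝ (fun y => a y * b y) x _ = _
  rw [fderiv_fun_mul ha hb]
  simp [pd, smul_eq_mul]
  ring

lemma diffAt_Qf (y : E n) : DifferentiableAt ℝ (Qf n) y := (hasFDerivAt_Qf y).differentiableAt

lemma diffAt_coordC (i : Fin n) (y : E n) :
    DifferentiableAt ℝ (fun z : E n => ((z i : ℝ) : ℂ)) y := (hasFDerivAt_coord i y).differentiableAt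

lemma pd_coordC (i : Fin n) (y : E n) :
    pd i (fun z : E n => ((z i : ℝ) : ℂ)) y = 1 := by
  show fderiv ℝ _ y _ = _
  rw [(hasFDerivAt_coord i y).fderiv]
  simp [EuclideanSpace.single_apply]

/-- Lemma B: `Δ(Rf) = R(Δf) + 2Δf` for `C³` functions on an open set. -/
lemma lap_radial (hs : IsOpen s) (hx : x ∈ s) (hf : ContDiffOn ℝ 3 f s) :
    lap (radialDeriv f) x = radialDeriv (lap f) x + 2 * lap f x := by
  have hf3 : ContDiffAt ℝ 3 f x := cda_of hs hx hf
  have hpdf : ∀ i : Fin n, ContDiffAt ℝ 2 (pd i f) x := fun i =>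
    pd_contDiffAt (by rw [← three_eq]; exact hf3) i
  have hpd2 : ∀ i : Fin n, DifferentiableAt ℝ (pd i (pd i f)) x := fun i =>
    pd_diffAt (hpdf i) i
  have key : ∀ i : Fin n, pd i (pd i (radialDeriv f)) x
      = radialDeriv (pd i (pd i f)) x + 2 * pd i (pd i f) x := by
    intro i
    have hev : pd i (radialDeriv f) =ᶠ[𝓝 x] fun y => radialDeriv (pd i f) y + pd i f y := by
      filter_upwards [hs.mem_nhds hx] with y hy
      exact pd_radial_eq ((cda_of hs hy hf).of_le (by norm_num)) i
    rw [pd_congr hev i,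
      pd_add (radial_diffAt (hpdf i)) ((hpdf i).differentiableAt (by norm_num)) i,
      pd_radial_eq (hpdf i) i]
    ring
  have hRlap : radialDeriv (lap f) x = ∑ i, radialDeriv (pd i (pd i f)) x := by
    have : lap f = fun y => ∑ i, pd i (pd i f) y := by funext y; exact lap_eq f y
    rw [radialDeriv, this, fderiv_fun_sum (fun i _ => hpd2 i)]
    simp [radialDeriv]
  rw [lap_eq, hRlap]
  calc ∑ i, pd i (pd i (radialDeriv f)) x
      = ∑ i, (radialDeriv (pd i (pd i f)) x + 2 * pd i (pd i f) x) :=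
        Finset.sum_congr rfl fun i _ => key i
    _ = ∑ i, radialDeriv (pd i (pd i f)) x + 2 * ∑ i, pd i (pd i f) x := by
        rw [Finset.sum_add_distrib, Finset.mul_sum]
    _ = _ := by rw [← lap_eq]

/-- Lemma A: `Δ(Qf) = QΔf - 4Rf - 2nf` for `C²` functions on an open set. -/
lemma lap_Qf_mul (hs : IsOpen s) (hx : x ∈ s) (hf : ContDiffOn ℝ 2 f s) :
    lap (fun y => Qf n y * f y) x
      = Qf n x * lap f x - 4 * radialDeriv f x - 2 * n * f x := by
  have hf2 : ContDiffAt ℝ 2 f x := cda_of hs hx hf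
  have key : ∀ i : Fin n, pd i (pd i (fun y => Qf n y * f y)) x
      = -2 * f x + (-2 * (x i : ℂ)) * pd i f x
        + ((-2 * (x i : ℂ)) * pd i f x + Qf n x * pd i (pd i f) x) := by
    intro i
    have hev : pd i (fun y => Qf n y * f y)
        =ᶠ[𝓝 x] fun y => (-2 * ((y i : ℝ) : ℂ)) * f y + Qf n y * pd i f y := by
      filter_upwards [hs.mem_nhds hx] with y hy
      rw [pd_mul (diffAt_Qf y) (((cda_of hs hy hf)).differentiableAt (by norm_num)) i, pd_Qf]
    rw [pd_congr hev i]
    have d1 : DifferentiableAt ℝ (fun y : E n => (-2 * ((y i : ℝ) : ℂ)) * f y) x :=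
      (((diffAt_coordC i x).const_mul (-2)).mul (hf2.differentiableAt (by norm_num)))
    have d2 : DifferentiableAt ℝ (fun y : E n => Qf n y * pd i f y) x :=
      (diffAt_Qf x).mul (pd_diffAt hf2 i)
    rw [pd_add d1 d2 i,
      pd_mul ((diffAt_coordC i x).const_mul (-2)) (hf2.differentiableAt (by norm_num)) i,
      pd_mul (diffAt_Qf x) (pd_diffAt hf2 i) i, pd_Qf]
    have hc : pd i (fun y : E n => -2 * ((y i : ℝ) : ℂ)) x = -2 := by
      rw [pd_const_mul (diffAt_coordC i x) (-2) i, pd_coordC]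
      ring
    rw [hc]
  have hR := radial_eq_sum (hf2.differentiableAt (by norm_num))
  rw [lap_eq]
  rw [Finset.sum_congr rfl (fun i _ => show _ = Qf n x * pd i (pd i f) x
    + ((-4 : ℂ) * (((x i : ℝ) : ℂ) * pd i f x) + -2 * f x) from by rw [key i]; ring)]
  rw [Finset.sum_add_distrib, Finset.sum_add_distrib, ← Finset.mul_sum, ← Finset.mul_sum,
    ← lap_eq, ← hR, Finset.sum_const, Finset.card_univ, Fintype.card_fin, nsmul_eq_mul]
  ring

end Aux7e
noncomputable section Aux7f
open Topology Filter
variable {n : ℕ} {f g : E n → ℂ} {x : E n} {s : Set (E n)}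

lemma lapIter_zero (f : E n → ℂ) : lapIter 0 f = f := rfl
lemma lapIter_one (f : E n → ℂ) : lapIter 1 f = lap f := rfl
lemma lapIter_succ (k : ℕ) (f : E n → ℂ) : lapIter (k+1) f = lapIter k (lap f) :=
  Function.iterate_succ_apply lap k f
lemma lapIter_succ' (k : ℕ) (f : E n → ℂ) : lapIter (k+1) f = lap (lapIter k f) :=
  Function.iterate_succ_apply' lap k f

lemma cast_succ2 (m : WithTop ℕ∞) (k : ℕ) : m + (2*(k+1) : ℕ) = (m + (2*k : ℕ)) + 2 := by
  push_cast
  ring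

lemma contDiffOn_lapIter (hs : IsOpen s) (k : ℕ) {m : WithTop ℕ∞}
    (hf : ContDiffOn ℝ (m + (2*k : ℕ)) f s) : ContDiffOn ℝ m (lapIter k f) s := by
  induction k generalizing f with
  | zero => simpa [lapIter_zero] using hf
  | succ k ih =>
    rw [lapIter_succ]
    refine ih (contDiffOn_lap hs ?_)
    rw [← cast_succ2]
    exact hf

lemma lapIter_congrOn (hs : IsOpen s) (k : ℕ) (h : ∀ y ∈ s, f y = g y) :
    ∀ x ∈ s, lapIter k f x = lapIter k g x := by
  induction k with
  | zero => exact h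
  | succ k ih =>
    intro x hx
    rw [lapIter_succ', lapIter_succ']
    refine lap_congr ?_
    filter_upwards [hs.mem_nhds hx] with y hy
    exact ih y hy

lemma lapIter_add (hs : IsOpen s) (k : ℕ) (hf : ContDiffOn ℝ ((2*k : ℕ) : WithTop ℕ∞) f s)
    (hg : ContDiffOn ℝ ((2*k : ℕ) : WithTop ℕ∞) g s) :
    ∀ x ∈ s, lapIter k (fun y => f y + g y) x = lapIter k f x + lapIter k g x := by
  induction k generalizing f g with
  | zero => intro x _; rfl
  | succ k ih =>
    intro x hx
    have hf' : ContDiffOn ℝ ((2*k : ℕ) : WithTop ℕ∞) f s :=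
      hf.of_le (by norm_cast; try omega)
    have hg' : ContDiffOn ℝ ((2*k : ℕ) : WithTop ℕ∞) g s :=
      hg.of_le (by norm_cast; try omega)
    rw [lapIter_succ', lapIter_succ', lapIter_succ']
    have hev : lapIter k (fun y => f y + g y) =ᶠ[𝓝 x]
        fun y => lapIter k f y + lapIter k g y := by
      filter_upwards [hs.mem_nhds hx] with y hy
      exact ih hf' hg' y hy
    rw [lap_congr hev]
    have h2f : ContDiffAt ℝ 2 (lapIter k f) x := by
      refine cda_of hs hx (contDiffOn_lapIter hs k ?_)
      rw [show (2 : WithTop ℕ∞) + (2*k : ℕ) = ((2*(k+1) : ℕ) : WithTop ℕ∞) by push_cast; ring]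
      exact hf
    have h2g : ContDiffAt ℝ 2 (lapIter k g) x := by
      refine cda_of hs hx (contDiffOn_lapIter hs k ?_)
      rw [show (2 : WithTop ℕ∞) + (2*k : ℕ) = ((2*(k+1) : ℕ) : WithTop ℕ∞) by push_cast; ring]
      exact hg
    exact lap_add h2f h2g

lemma lapIter_const_mul (hs : IsOpen s) (k : ℕ) (c : ℂ)
    (hf : ContDiffOn ℝ ((2*k : ℕ) : WithTop ℕ∞) f s) :
    ∀ x ∈ s, lapIter k (fun y => c * f y) x = c * lapIter k f x := by
  induction k generalizing f with
  | zero => intro x _; rfl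
  | succ k ih =>
    intro x hx
    have hf' : ContDiffOn ℝ ((2*k : ℕ) : WithTop ℕ∞) f s :=
      hf.of_le (by norm_cast; try omega)
    rw [lapIter_succ', lapIter_succ']
    have hev : lapIter k (fun y => c * f y) =ᶠ[𝓝 x] fun y => c * lapIter k f y := by
      filter_upwards [hs.mem_nhds hx] with y hy
      exact ih hf' y hy
    rw [lap_congr hev]
    have h2f : ContDiffAt ℝ 2 (lapIter k f) x := by
      refine cda_of hs hx (contDiffOn_lapIter hs k ?_)
      rw [show (2 : WithTop ℕ∞) + (2*k : ℕ) = ((2*(k+1) : ℕ) : WithTop ℕ∞) by push_cast; ring]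
      exact hf
    exact lap_const_mul c h2f

end Aux7f
noncomputable section Aux7g
open Topology Filter
variable {n : ℕ} {f u : E n → ℂ} {x : E n} {s : Set (E n)}

lemma Lop_eq (θ : ℝ) (u : E n → ℂ) (y : E n) :
    Lop θ u y = Qf n y * lap u y
      + (((4 * θ : ℝ) : ℂ) * radialDeriv u y
        + ((2 * θ * ((n : ℝ) - 2 - 2 * θ) : ℝ) : ℂ) * u y) := by
  simp only [Lop, Qf]
  ring

lemma contDiffOn_Qf_mul {j : ℕ} (hf : ContDiffOn ℝ ((j : ℕ) : WithTop ℕ∞) f s) :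
    ContDiffOn ℝ ((j : ℕ) : WithTop ℕ∞) (fun y => Qf n y * f y) s :=
  ((contDiff_Qf.of_le (by exact_mod_cast le_top)).contDiffOn).mul hf

/-- Iterated commutation of `Δ^k` with the radial derivative. -/
lemma radial_comm (hs : IsOpen s) (k : ℕ)
    (hf : ContDiffOn ℝ ((2*k+1 : ℕ) : WithTop ℕ∞) f s) :
    ∀ x ∈ s, lapIter k (radialDeriv f) x
      = radialDeriv (lapIter k f) x + 2 * (k : ℂ) * lapIter k f x := by
  induction k generalizing f with
  | zero =>
    intro x _
    simp [lapIter_zero]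
  | succ k ih =>
    intro x hx
    have hlapf : ContDiffOn ℝ ((2*k+1 : ℕ) : WithTop ℕ∞) (lap f) s := by
      refine contDiffOn_lap hs ?_
      rw [show ((2*k+1 : ℕ) : WithTop ℕ∞) + 2 = ((2*(k+1)+1 : ℕ) : WithTop ℕ∞) by
        push_cast; ring]
      exact hf
    rw [lapIter_succ k (radialDeriv f)]
    have hcongr : ∀ y ∈ s, lap (radialDeriv f) y
        = radialDeriv (lap f) y + 2 * lap f y := fun y hy =>
      lap_radial hs hy (hf.of_le (by norm_cast; try omega))
    rw [lapIter_congrOn hs k hcongr x hx]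
    have hA : ContDiffOn ℝ ((2*k : ℕ) : WithTop ℕ∞) (radialDeriv (lap f)) s := by
      refine contDiffOn_radial hs ?_
      rw [show ((2*k : ℕ) : WithTop ℕ∞) + 1 = ((2*k+1 : ℕ) : WithTop ℕ∞) by push_cast; ring]
      exact hlapf
    have hB : ContDiffOn ℝ ((2*k : ℕ) : WithTop ℕ∞) (fun y => (2:ℂ) * lap f y) s :=
      contDiffOn_const.mul (hlapf.of_le (by norm_cast; try omega))
    rw [lapIter_add hs k hA hB x hx,
      lapIter_const_mul hs k 2 (hlapf.of_le (by norm_cast; try omega)) x hx,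
      ih hlapf x hx, ← lapIter_succ]
    push_cast
    ring

/-- Iterated commutation of `Δ^{k+1}` with multiplication by `Q`. -/
lemma Q_comm (hs : IsOpen s) (k : ℕ)
    (hf : ContDiffOn ℝ ((2*k+2 : ℕ) : WithTop ℕ∞) f s) :
    ∀ x ∈ s, lapIter (k+1) (fun y => Qf n y * f y) x
      = Qf n x * lapIter (k+1) f x - 4 * ((k : ℂ)+1) * radialDeriv (lapIter k f) x
        - 2 * ((k : ℂ)+1) * ((n : ℂ) + 2*(k : ℂ)) * lapIter k f x := by
  induction k generalizing f with
  | zero =>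
    intro x hx
    have h2 : ContDiffOn ℝ 2 f s := by
      have := hf; norm_num at this; exact this
    rw [show (0:ℕ)+1 = 1 from rfl, lapIter_one, lapIter_one, lapIter_zero,
      lap_Qf_mul hs hx h2]
    push_cast
    ring
  | succ k ih =>
    intro x hx
    have hlapf : ContDiffOn ℝ ((2*k+2 : ℕ) : WithTop ℕ∞) (lap f) s := by
      refine contDiffOn_lap hs ?_
      rw [show ((2*k+2 : ℕ) : WithTop ℕ∞) + 2 = ((2*(k+1)+2 : ℕ) : WithTop ℕ∞) by
        push_cast; ring]
      exact hf
    have hRf : ContDiffOn ℝ ((2*k+2 : ℕ) : WithTop ℕ∞) (radialDeriv f) s := by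
      refine contDiffOn_radial hs ?_
      rw [show ((2*k+2 : ℕ) : WithTop ℕ∞) + 1 = ((2*(k+1)+1 : ℕ) : WithTop ℕ∞) by
        push_cast; ring]
      exact hf.of_le (by norm_cast; try omega)
    rw [lapIter_succ (k+1) (fun y => Qf n y * f y)]
    have hcongr : ∀ y ∈ s, lap (fun y => Qf n y * f y) y
        = Qf n y * lap f y + ((-4:ℂ) * radialDeriv f y + (-2*(n:ℂ)) * f y) := by
      intro y hy
      rw [lap_Qf_mul hs hy (hf.of_le (by norm_cast; try omega))]
      push_cast
      ring
    rw [lapIter_congrOn hs (k+1) hcongr x hx]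
    have hA : ContDiffOn ℝ ((2*(k+1) : ℕ) : WithTop ℕ∞) (fun y => Qf n y * lap f y) s := by
      refine contDiffOn_Qf_mul (j := 2*(k+1)) ?_
      rw [show ((2*(k+1) : ℕ) : WithTop ℕ∞) = ((2*k+2 : ℕ) : WithTop ℕ∞) by push_cast; ring]
      exact hlapf
    have hB1 : ContDiffOn ℝ ((2*(k+1) : ℕ) : WithTop ℕ∞)
        (fun y => (-4:ℂ) * radialDeriv f y) s :=
      contDiffOn_const.mul (hRf.of_le (by norm_cast; try omega))
    have hB2 : ContDiffOn ℝ ((2*(k+1) : ℕ) : WithTop ℕ∞)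
        (fun y => (-2*(n:ℂ)) * f y) s :=
      contDiffOn_const.mul (hf.of_le (by norm_cast; try omega))
    rw [lapIter_add hs (k+1) hA (hB1.add hB2) x hx,
      lapIter_add hs (k+1) hB1 hB2 x hx,
      lapIter_const_mul hs (k+1) (-4) (hRf.of_le (by norm_cast; try omega)) x hx,
      lapIter_const_mul hs (k+1) (-2*(n:ℂ)) (hf.of_le (by norm_cast; try omega)) x hx,
      ih hlapf x hx,
      radial_comm hs (k+1) (hf.of_le (by norm_cast; try omega)) x hx,
      ← lapIter_succ, ← lapIter_succ]
    push_cast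
    ring

/-- Key lemma: `Δ^k (L_k u) = Q · Δ^{k+1} u`. -/
lemma key_lemma (hs : IsOpen s) (k : ℕ)
    (hu : ContDiffOn ℝ ((2*k+2 : ℕ) : WithTop ℕ∞) u s) :
    ∀ x ∈ s, lapIter k (Lop (k : ℝ) u) x = Qf n x * lapIter (k+1) u x := by
  cases k with
  | zero =>
    intro x hx
    rw [lapIter_zero, lapIter_one, Lop_eq]
    push_cast
    ring
  | succ m =>
    intro x hx
    have hlapu : ContDiffOn ℝ ((2*m+2 : ℕ) : WithTop ℕ∞) (lap u) s := by
      refine contDiffOn_lap hs ?_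
      rw [show ((2*m+2 : ℕ) : WithTop ℕ∞) + 2 = ((2*(m+1)+2 : ℕ) : WithTop ℕ∞) by
        push_cast; ring]
      exact hu
    have hRu : ContDiffOn ℝ ((2*(m+1) : ℕ) : WithTop ℕ∞) (radialDeriv u) s := by
      refine contDiffOn_radial hs ?_
      rw [show ((2*(m+1) : ℕ) : WithTop ℕ∞) + 1 = ((2*(m+1)+1 : ℕ) : WithTop ℕ∞) by
        push_cast; ring]
      exact hu.of_le (by norm_cast; try omega)
    set c1 : ℂ := ((4 * ((m+1 : ℕ) : ℝ) : ℝ) : ℂ) with hc1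
    set c2 : ℂ := ((2 * ((m+1 : ℕ) : ℝ) * ((n : ℝ) - 2 - 2 * ((m+1 : ℕ) : ℝ)) : ℝ) : ℂ) with hc2
    have hcongr : ∀ y ∈ s, Lop ((m+1 : ℕ) : ℝ) u y
        = Qf n y * lap u y + (c1 * radialDeriv u y + c2 * u y) := fun y _ => Lop_eq _ u y
    rw [lapIter_congrOn hs (m+1) hcongr x hx]
    have hA : ContDiffOn ℝ ((2*(m+1) : ℕ) : WithTop ℕ∞) (fun y => Qf n y * lap u y) s := by
      refine contDiffOn_Qf_mul (j := 2*(m+1)) ?_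
      rw [show ((2*(m+1) : ℕ) : WithTop ℕ∞) = ((2*m+2 : ℕ) : WithTop ℕ∞) by push_cast; ring]
      exact hlapu
    have hB1 : ContDiffOn ℝ ((2*(m+1) : ℕ) : WithTop ℕ∞) (fun y => c1 * radialDeriv u y) s :=
      contDiffOn_const.mul hRu
    have hB2 : ContDiffOn ℝ ((2*(m+1) : ℕ) : WithTop ℕ∞) (fun y => c2 * u y) s :=
      contDiffOn_const.mul (hu.of_le (by norm_cast; try omega))
    rw [lapIter_add hs (m+1) hA (hB1.add hB2) x hx,
      lapIter_add hs (m+1) hB1 hB2 x hx,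
      lapIter_const_mul hs (m+1) c1 hRu x hx,
      lapIter_const_mul hs (m+1) c2 (hu.of_le (by norm_cast; try omega)) x hx,
      Q_comm hs m hlapu x hx,
      radial_comm hs (m+1) (hu.of_le (by norm_cast; try omega)) x hx,
      ← lapIter_succ, ← lapIter_succ, hc1, hc2]
    push_cast
    ring

lemma contDiffOn_Lop (hs : IsOpen s) (θ : ℝ) {m : ℕ}
    (hu : ContDiffOn ℝ ((2*m+2 : ℕ) : WithTop ℕ∞) u s) :
    ContDiffOn ℝ ((2*m : ℕ) : WithTop ℕ∞) (Lop θ u) s := by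
  have h : Lop θ u = fun y => Qf n y * lap u y
      + (((4 * θ : ℝ) : ℂ) * radialDeriv u y
        + ((2 * θ * ((n : ℝ) - 2 - 2 * θ) : ℝ) : ℂ) * u y) := funext (Lop_eq θ u)
  rw [h]
  have hlapu : ContDiffOn ℝ ((2*m : ℕ) : WithTop ℕ∞) (lap u) s := by
    refine contDiffOn_lap hs ?_
    rw [show ((2*m : ℕ) : WithTop ℕ∞) + 2 = ((2*m+2 : ℕ) : WithTop ℕ∞) by push_cast; ring]
    exact hu
  have hRu : ContDiffOn ℝ ((2*m : ℕ) : WithTop ℕ∞) (radialDeriv u) s := by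
    refine contDiffOn_radial hs ?_
    rw [show ((2*m : ℕ) : WithTop ℕ∞) + 1 = ((2*m+1 : ℕ) : WithTop ℕ∞) by push_cast; ring]
    exact hu.of_le (by norm_cast; try omega)
  exact (contDiffOn_Qf_mul (j := 2*m) hlapu).add
    ((contDiffOn_const.mul hRu).add (contDiffOn_const.mul (hu.of_le (by norm_cast; try omega))))

theorem stmt7_general (n N : ℕ) (u : E n → ℂ)
    (hu : ContDiffOn ℝ ((2 * N : ℕ) : WithTop ℕ∞) u (unitBall n)) :
    ∀ x ∈ unitBall n,
      Lcomp N u x = (((1 - ‖x‖ ^ 2) ^ N : ℝ) : ℂ) * lapIter N u x := by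
  induction N generalizing u with
  | zero =>
    intro x _
    simp [Lcomp, lapIter_zero]
  | succ N ih =>
    intro x hx
    have hs : IsOpen (unitBall n) := Metric.isOpen_ball
    have hu' : ContDiffOn ℝ ((2*N+2 : ℕ) : WithTop ℕ∞) u (unitBall n) := by
      rw [show ((2*N+2 : ℕ) : WithTop ℕ∞) = ((2*(N+1) : ℕ) : WithTop ℕ∞) by push_cast; ring]
      exact hu
    have hLop : ContDiffOn ℝ ((2*N : ℕ) : WithTop ℕ∞) (Lop (N : ℝ) u) (unitBall n) :=
      contDiffOn_Lop hs (N : ℝ) hu'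
    have hstep : Lcomp (N+1) u = Lcomp N (Lop (N : ℝ) u) := rfl
    rw [hstep, ih (Lop (N : ℝ) u) hLop x hx, key_lemma hs N hu' x hx]
    have hQ : Qf n x = ((1 - ‖x‖ ^ 2 : ℝ) : ℂ) := rfl
    rw [hQ]
    push_cast [pow_succ]
    ring

end Aux7g

/-- the factorization `L_0 L_1 ⋯ L_{N-1} = M^N Δ^N`. -/
theorem stmt7 (n N : ℕ) (hn : 2 ≤ n) (hN : 1 ≤ N) (u : E n → ℂ)
    (hu : ContDiffOn ℝ (2 * N : ℕ) u (unitBall n)) :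
    ∀ x ∈ unitBall n,
      Lcomp N u x = (((1 - ‖x‖ ^ 2) ^ N : ℝ) : ℂ) * lapIter N u x := by
  intro x hx
  exact stmt7_general n N u hu x hx
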